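/- Let (μₙ)_{n∈ℕ} be a sequence of probability measures on a measurable space Ω and let A₁, A₂, C be measurable sets. Suppose that for every ε > 0 there exists N such that for all n ≥ N, μₙ(A₁ ∩ C) ≥ (1 − ε)·μₙ(A₁), and likewise for every ε > 0 there exists N such that for all n ≥ N, μₙ(A₂ ∩ C) ≥ (1 − ε)·μₙ(A₂). Then for every ε > 0 there exists N such that for all n ≥ N, μₙ((A₁ ∪ A₂) ∩ C) ≥ (1 − ε)·μₙ(A₁ ∪ A₂). (This is the soundness of the KLM disjunction rule OR under the limit (convergence) semantics, in which φ ⇒ ψ holds iff the conditional probability of ψ given φ under μₙ tends to 1.) -/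

import Mathlib

open MeasureTheory

lemma diff_bound {Ω : Type*} [MeasurableSpace Ω] (μ : Measure Ω)
    [IsProbabilityMeasure μ] (A C : Set Ω) (hC : MeasurableSet C)
    {δ : ℝ} (hδ0 : 0 ≤ δ) (hδ1 : δ ≤ 1)
    (h : ENNReal.ofReal (1 - δ) * μ A ≤ μ (A ∩ C)) :
    μ (A \ C) ≤ ENNReal.ofReal δ * μ A := by
  have hsplit : μ (A ∩ C) + μ (A \ C) = μ A := measure_inter_add_diff A hC
  have hfin : μ (A ∩ C) ≠ ⊤ := measure_ne_top μ _
  have h1 : μ (A \ C) = μ A - μ (A ∩ C) := by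
    rw [← hsplit]; simp [ENNReal.add_sub_cancel_left hfin]
  rw [h1]
  have h2 : μ A - μ (A ∩ C) ≤ μ A - ENNReal.ofReal (1 - δ) * μ A :=
    tsub_le_tsub_left h _
  refine h2.trans (le_of_eq ?_)
  have : μ A - ENNReal.ofReal (1 - δ) * μ A
      = (1 - ENNReal.ofReal (1 - δ)) * μ A := by
    rw [ENNReal.sub_mul (fun _ _ => measure_ne_top μ _), one_mul]
  rw [this]
  congr 1
  rw [← ENNReal.ofReal_one, ← ENNReal.ofReal_sub _ (by linarith)]
  norm_num

/-- Soundness of the KLM disjunction rule OR under the limit (convergence)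
semantics. -/
theorem KLM_OR_limit {Ω : Type*} [MeasurableSpace Ω]
    (μ : ℕ → Measure Ω) (hμ : ∀ n, IsProbabilityMeasure (μ n))
    (A₁ A₂ C : Set Ω)
    (hA₁ : MeasurableSet A₁) (hA₂ : MeasurableSet A₂) (hC : MeasurableSet C)
    (h₁ : ∀ ε : ℝ, 0 < ε → ∃ N : ℕ, ∀ n ≥ N,
      ENNReal.ofReal (1 - ε) * μ n A₁ ≤ μ n (A₁ ∩ C))
    (h₂ : ∀ ε : ℝ, 0 < ε → ∃ N : ℕ, ∀ n ≥ N,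
      ENNReal.ofReal (1 - ε) * μ n A₂ ≤ μ n (A₂ ∩ C)) :
    ∀ ε : ℝ, 0 < ε → ∃ N : ℕ, ∀ n ≥ N,
      ENNReal.ofReal (1 - ε) * μ n (A₁ ∪ A₂) ≤ μ n ((A₁ ∪ A₂) ∩ C) := by
  intro ε hε
  rcases le_or_gt 1 ε with hε1 | hε1
  · refine ⟨0, fun n _ => ?_⟩
    have : ENNReal.ofReal (1 - ε) = 0 := by
      simp [ENNReal.ofReal_eq_zero]; linarith
    simp [this]
  · -- ε < 1
    obtain ⟨N₁, hN₁⟩ := h₁ (ε / 2) (by linarith)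
    obtain ⟨N₂, hN₂⟩ := h₂ (ε / 2) (by linarith)
    refine ⟨max N₁ N₂, fun n hn => ?_⟩
    haveI := hμ n
    set U := A₁ ∪ A₂ with hU
    have hd1 : μ n (A₁ \ C) ≤ ENNReal.ofReal (ε / 2) * μ n A₁ :=
      diff_bound (μ n) A₁ C hC (by linarith) (by linarith)
        (hN₁ n (le_trans (le_max_left _ _) hn))
    have hd2 : μ n (A₂ \ C) ≤ ENNReal.ofReal (ε / 2) * μ n A₂ :=
      diff_bound (μ n) A₂ C hC (by linarith) (by linarith)
        (hN₂ n (le_trans (le_max_right _ _) hn))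
    have hUd : μ n (U \ C) ≤ ENNReal.ofReal ε * μ n U := by
      have hsub : U \ C = (A₁ \ C) ∪ (A₂ \ C) := Set.union_diff_distrib
      calc μ n (U \ C) = μ n ((A₁ \ C) ∪ (A₂ \ C)) := by rw [hsub]
        _ ≤ μ n (A₁ \ C) + μ n (A₂ \ C) := measure_union_le _ _
        _ ≤ ENNReal.ofReal (ε / 2) * μ n A₁ + ENNReal.ofReal (ε / 2) * μ n A₂ :=
            add_le_add hd1 hd2
        _ ≤ ENNReal.ofReal (ε / 2) * μ n U + ENNReal.ofReal (ε / 2) * μ n U :=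
            add_le_add (mul_le_mul_right (measure_mono Set.subset_union_left) _)
              (mul_le_mul_right (measure_mono Set.subset_union_right) _)
        _ = ENNReal.ofReal ε * μ n U := by
            rw [← add_mul, ← ENNReal.ofReal_add (by linarith) (by linarith)]
            norm_num
    have hsplit : μ n (U ∩ C) + μ n (U \ C) = μ n U := measure_inter_add_diff U hC
    have hfin : ENNReal.ofReal ε * μ n U ≠ ⊤ :=
      ENNReal.mul_ne_top ENNReal.ofReal_ne_top (measure_ne_top _ _)
    rw [← ENNReal.add_le_add_iff_right hfin]
    calc ENNReal.ofReal (1 - ε) * μ n U + ENNReal.ofReal ε * μ n U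
        = μ n U := by
          rw [← add_mul, ← ENNReal.ofReal_add (by linarith) (by linarith)]
          norm_num
      _ = μ n (U ∩ C) + μ n (U \ C) := hsplit.symm
      _ ≤ μ n (U ∩ C) + ENNReal.ofReal ε * μ n U := add_le_add_right hUd _
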